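/- arXiv:1411.6564 — 3 statements merged into one kernel-verified Lean document; each statement's English description precedes it below -/
import Mathlib

section
/- Let α, β ∈ ℝ. Consider the map H : ℝ × S¹ → ℂ² defined by H(t, (x₀,x₁)) = (e^{-t} x₀ + e^{t} e^{iα} x₀, e^{-t} x₁ + e^{t} e^{iβ} x₁) for (x₀,x₁) ∈ ℝ² with x₀² + x₁² = 1. If sin α = sin β, then the image of H is an isotropic (hence, where it is a 2-dimensional submanifold, Lagrangian) subset of ℂ² with the standard symplectic form ω = dx₀∧dy₀ + dx₁∧dy₁; equivalently, the pullback of ω by H vanishes identically. -/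
open Complex Real

/-- The standard symplectic form on `ℂ × ℂ`:
`ω((u₁,u₂),(v₁,v₂)) = Im(conj u₁ · v₁) + Im(conj u₂ · v₂)`. -/
noncomputable def stdSymp (u v : ℂ × ℂ) : ℝ :=
  ((starRingEnd ℂ) u.1 * v.1).im + ((starRingEnd ℂ) u.2 * v.2).im

/-- The handle map `H(t,(x₀,x₁)) = (e^{-t}x₀ + e^{t}e^{iα}x₀, e^{-t}x₁ + e^{t}e^{iβ}x₁)`. -/
noncomputable def handle (α β : ℝ) (t x₀ x₁ : ℝ) : ℂ × ℂ :=
  (Real.exp (-t) * x₀ + Real.exp t * Complex.exp (α * Complex.I) * x₀,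
   Real.exp (-t) * x₁ + Real.exp t * Complex.exp (β * Complex.I) * x₁)

/-- The partial derivative of `handle` in the `t`-direction. -/
noncomputable def handleDt (α β : ℝ) (t x₀ x₁ : ℝ) : ℂ × ℂ :=
  (-Real.exp (-t) * x₀ + Real.exp t * Complex.exp (α * Complex.I) * x₀,
   -Real.exp (-t) * x₁ + Real.exp t * Complex.exp (β * Complex.I) * x₁)

/-- The partial derivative of `handle` in the circle direction: at `(x₀,x₁)` on the unit
circle the tangent direction is `(-x₁, x₀)`. -/
noncomputable def handleDθ (α β : ℝ) (t x₀ x₁ : ℝ) : ℂ × ℂ :=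
  (Real.exp (-t) * (-x₁) + Real.exp t * Complex.exp (α * Complex.I) * (-x₁),
   Real.exp (-t) * x₀ + Real.exp t * Complex.exp (β * Complex.I) * x₀)

/-- If `sin α = sin β`, the pullback of the standard symplectic form of `ℂ²` under the
handle map `H` vanishes identically: `ω(∂ₜH, ∂_θH) = 0` at every point of
`ℝ × {x₀² + x₁² = 1}`; i.e. the image of `H` is isotropic (Lagrangian where it is a
`2`-dimensional submanifold). -/
theorem handle_isotropic (α β : ℝ) (h : Real.sin α = Real.sin β)
    (t x₀ x₁ : ℝ) (hx : x₀ ^ 2 + x₁ ^ 2 = 1) :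
    stdSymp (handleDt α β t x₀ x₁) (handleDθ α β t x₀ x₁) = 0 := by
  simp only [stdSymp, handleDt, handleDθ, Complex.exp_mul_I]
  simp [Complex.mul_im, Complex.mul_re, Complex.add_im, Complex.add_re,
    Complex.exp_ofReal_re, Complex.exp_ofReal_im, Complex.sin_ofReal_re,
    Complex.cos_ofReal_re, Complex.sin_ofReal_im, Complex.cos_ofReal_im, ← Complex.ofReal_neg]
  rw [h]
  ring
end

section
/- With the same setup, if sin α = −sin β, then the pullback of the standard symplectic form of ℂ² under the map H'(t,(x₀,x₁)) = (e^{-t}x₀ + e^{t}e^{iα}x₀, e^{-t}x₁ − e^{t}e^{iβ}x₁) (for x₀²+x₁²=1, t ∈ ℝ) vanishes identically. -/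
open Complex Real

/-- The modified handle map
`H'(t,(x₀,x₁)) = (e^{-t}x₀ + e^{t}e^{iα}x₀, e^{-t}x₁ + e^{t}e^{iβ}(−x₁))`. -/
noncomputable def handle' (α β : ℝ) (t x₀ x₁ : ℝ) : ℂ × ℂ :=
  (Real.exp (-t) * x₀ + Real.exp t * Complex.exp (α * Complex.I) * x₀,
   Real.exp (-t) * x₁ + Real.exp t * Complex.exp (β * Complex.I) * (-x₁))

/-- The partial derivative of `handle'` in the `t`-direction. -/
noncomputable def handle'Dt (α β : ℝ) (t x₀ x₁ : ℝ) : ℂ × ℂ :=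
  (-Real.exp (-t) * x₀ + Real.exp t * Complex.exp (α * Complex.I) * x₀,
   -Real.exp (-t) * x₁ + Real.exp t * Complex.exp (β * Complex.I) * (-x₁))

/-- The partial derivative of `handle'` in the circle direction: at `(x₀,x₁)` on the unit
circle the tangent direction is `(-x₁, x₀)`. -/
noncomputable def handle'Dθ (α β : ℝ) (t x₀ x₁ : ℝ) : ℂ × ℂ :=
  (Real.exp (-t) * (-x₁) + Real.exp t * Complex.exp (α * Complex.I) * (-x₁),
   Real.exp (-t) * x₀ + Real.exp t * Complex.exp (β * Complex.I) * (-x₀))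

/-- If `sin α = −sin β`, the pullback of the standard symplectic form of `ℂ²` under the
modified handle map `H'` vanishes identically on `ℝ × {x₀² + x₁² = 1}`. -/
theorem handle'_isotropic (α β : ℝ) (h : Real.sin α = -Real.sin β)
    (t x₀ x₁ : ℝ) (hx : x₀ ^ 2 + x₁ ^ 2 = 1) :
    stdSymp (handle'Dt α β t x₀ x₁) (handle'Dθ α β t x₀ x₁) = 0 := by
  simp only [stdSymp, handle'Dt, handle'Dθ, Complex.exp_mul_I, Complex.mul_im,
    Complex.add_im, Complex.add_re, Complex.mul_re, Complex.conj_re, Complex.conj_im,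
    Complex.ofReal_re, Complex.ofReal_im, Complex.neg_re, Complex.neg_im, Complex.I_re,
    Complex.I_im, Complex.cos_ofReal_re, Complex.cos_ofReal_im, Complex.sin_ofReal_re,
    Complex.sin_ofReal_im, Complex.ofReal_neg]
  ring_nf
  rw [h]; ring
end

section
/- Let L₀ = {[x₀:x₁:x₂] ∈ ℂP² : x₀,x₁,x₂ ∈ ℝ} and L₁ = {[e^{iπ/3}x₀ : e^{−iπ/3}x₁ : x₂] : x₀,x₁,x₂ ∈ ℝ}. Then L₀ ∩ L₁ = {[0:0:1], [0:1:0], [1:0:0]}. -/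
open Complex Real

noncomputable section

/-- The `j`-th standard basis vector of `ℂ³`. -/
def stdVec (j : Fin 3) : Fin 3 → ℂ := fun i => if i = j then 1 else 0

theorem stdVec_ne_zero (j : Fin 3) : stdVec j ≠ 0 := by
  intro h
  have := congrFun h j
  simp [stdVec] at this

/-- The standard real projective plane `L₀ = {[x₀:x₁:x₂] : xᵢ ∈ ℝ}` in `ℂP²`. -/
def realRP2 : Set (Projectivization ℂ (Fin 3 → ℂ)) :=
  {p | ∃ (z : Fin 3 → ℂ) (hz : z ≠ 0), (∀ i, (z i).im = 0) ∧ p = Projectivization.mk ℂ z hz}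

/-- The rotated copy `L₁ = {[e^{iπ/3}x₀ : e^{−iπ/3}x₁ : x₂] : xᵢ ∈ ℝ}` in `ℂP²`. -/
def rotRP2 : Set (Projectivization ℂ (Fin 3 → ℂ)) :=
  {p | ∃ (x : Fin 3 → ℝ) (hz : ![Complex.exp (π / 3 * I) * x 0,
        Complex.exp (-(π / 3) * I) * x 1, (x 2 : ℂ)] ≠ 0),
      p = Projectivization.mk ℂ _ hz}

lemma real_ratio (a u v : ℂ) (ha : a ≠ 0) (hu : (a*u).im = 0) (hv : (a*v).im = 0) :
    (u * (starRingEnd ℂ) v).im = 0 := by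
  have h : (a*u) * (starRingEnd ℂ) (a*v) = (Complex.normSq a : ℂ) * (u * (starRingEnd ℂ) v) := by
    rw [map_mul, ← Complex.mul_conj]; ring
  have h2 : ((a*u) * (starRingEnd ℂ) (a*v)).im = 0 := by
    rw [Complex.mul_im, hu, Complex.conj_im, hv]; ring
  rw [h] at h2
  simp only [Complex.mul_im, Complex.ofReal_re, Complex.ofReal_im, zero_mul, add_zero] at h2
  rcases mul_eq_zero.1 h2 with h3 | h3
  · exact absurd (Complex.normSq_eq_zero.1 h3) ha
  · exact h3

lemma im01 : (Complex.exp (π / 3 * I) * (starRingEnd ℂ) (Complex.exp (-(π / 3) * I))).im ≠ 0 := by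
  rw [← Complex.exp_conj, ← Complex.exp_add]
  have : (π / 3 * I + (starRingEnd ℂ) (-(π / 3) * I)) = ((2*π/3 : ℝ) : ℂ) * I := by
    simp only [map_mul, map_neg, map_div₀, Complex.conj_I, Complex.conj_ofReal, map_ofNat]
    push_cast; ring
  rw [this, Complex.exp_ofReal_mul_I_im]
  have := Real.sin_pos_of_pos_of_lt_pi (x := 2*π/3) (by positivity) (by linarith [Real.pi_pos])
  linarith

lemma im02 : (Complex.exp (π / 3 * I) * (starRingEnd ℂ) 1).im ≠ 0 := by
  rw [map_one, mul_one]
  have : ((π/3 : ℝ) : ℂ) * I = π / 3 * I := by push_cast; ring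
  rw [← this, Complex.exp_ofReal_mul_I_im]
  have := Real.sin_pos_of_pos_of_lt_pi (x := π/3) (by positivity) (by linarith [Real.pi_pos])
  linarith

lemma im12 : (Complex.exp (-(π / 3) * I) * (starRingEnd ℂ) 1).im ≠ 0 := by
  rw [map_one, mul_one]
  have : ((-(π/3) : ℝ) : ℂ) * I = -(π/3) * I := by push_cast; ring
  rw [← this, Complex.exp_ofReal_mul_I_im]
  have := Real.sin_pos_of_pos_of_lt_pi (x := π/3) (by positivity) (by linarith [Real.pi_pos])
  rw [Real.sin_neg]
  linarith

/-- The two real projective planes `L₀` and `L₁` in `ℂP²` intersect exactly in the three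
coordinate points `[1:0:0]`, `[0:1:0]`, `[0:0:1]`. -/
theorem realRP2_inter_rotRP2 :
    realRP2 ∩ rotRP2 =
      {Projectivization.mk ℂ (stdVec 0) (stdVec_ne_zero 0),
       Projectivization.mk ℂ (stdVec 1) (stdVec_ne_zero 1),
       Projectivization.mk ℂ (stdVec 2) (stdVec_ne_zero 2)} := by
  ext p
  constructor
  · rintro ⟨⟨z, hz, hzre, rfl⟩, ⟨x, hw, hpw⟩⟩
    set u0 := Complex.exp (π / 3 * I) with hu0
    set u1 := Complex.exp (-(π / 3) * I) with hu1
    set w : Fin 3 → ℂ := ![u0 * x 0, u1 * x 1, (x 2 : ℂ)] with hwdef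
    obtain ⟨a, ha⟩ := (Projectivization.mk_eq_mk_iff ℂ z w hz hw).1 hpw
    have hane : (a : ℂ) ≠ 0 := a.ne_zero
    have e0 : z 0 = (a : ℂ) * (u0 * x 0) := by
      have := congrFun ha 0; simpa [hwdef, Units.smul_def] using this.symm
    have e1 : z 1 = (a : ℂ) * (u1 * x 1) := by
      have := congrFun ha 1; simpa [hwdef, Units.smul_def] using this.symm
    have e2 : z 2 = (a : ℂ) * (1 * x 2) := by
      have := congrFun ha 2; simpa [hwdef, Units.smul_def] using this.symm
    have key : ∀ (u : ℂ) (r : ℝ), r ≠ 0 → ((a : ℂ) * (u * r)).im = 0 → ((a : ℂ)*u).im = 0 := by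
      intro u r hr h
      have h' : (((a : ℂ)*u) * (r : ℂ)).im = 0 := by
        rw [show (a : ℂ)*u*(r : ℂ) = (a : ℂ)*(u*r) by ring]; exact h
      simp only [Complex.mul_im, Complex.ofReal_re, Complex.ofReal_im, mul_zero, zero_add] at h'
      exact (mul_eq_zero.1 h').resolve_right hr
    have h0 := e0 ▸ hzre 0
    have h1 := e1 ▸ hzre 1
    have h2 := e2 ▸ hzre 2
    by_cases hx0 : x 0 = 0 <;> by_cases hx1 : x 1 = 0 <;> by_cases hx2 : x 2 = 0
    · exact absurd (funext fun i => by fin_cases i <;> simp [hwdef, hx0, hx1, hx2]) hw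
    · -- only x 2 ≠ 0
      right; right
      rw [hpw]
      refine (Projectivization.mk_eq_mk_iff' ℂ _ _ hw (stdVec_ne_zero 2)).2 ⟨(x 2 : ℂ), ?_⟩
      funext i; fin_cases i <;> simp [hwdef, stdVec, hx0, hx1]
    · -- only x 1 ≠ 0
      right; left
      rw [hpw]
      refine (Projectivization.mk_eq_mk_iff' ℂ _ _ hw (stdVec_ne_zero 1)).2 ⟨u1 * (x 1 : ℂ), ?_⟩
      funext i; fin_cases i <;> simp [hwdef, stdVec, hx0, hx2]
    · exact absurd (real_ratio _ _ _ hane (key _ _ hx1 h1) (key _ _ hx2 h2)) im12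
    · -- only x 0 ≠ 0
      left
      rw [hpw]
      refine (Projectivization.mk_eq_mk_iff' ℂ _ _ hw (stdVec_ne_zero 0)).2 ⟨u0 * (x 0 : ℂ), ?_⟩
      funext i; fin_cases i <;> simp [hwdef, stdVec, hx1, hx2]
    · exact absurd (real_ratio _ _ _ hane (key _ _ hx0 h0) (key _ _ hx2 h2)) im02
    · exact absurd (real_ratio _ _ _ hane (key _ _ hx0 h0) (key _ _ hx1 h1)) im01
    · exact absurd (real_ratio _ _ _ hane (key _ _ hx0 h0) (key _ _ hx1 h1)) im01
  · intro hp
    have hreal : ∀ j, Projectivization.mk ℂ (stdVec j) (stdVec_ne_zero j) ∈ realRP2 := by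
      intro j
      exact ⟨stdVec j, stdVec_ne_zero j, fun i => by
        by_cases h : i = j <;> simp [stdVec, h], rfl⟩
    have hrot : ∀ j, Projectivization.mk ℂ (stdVec j) (stdVec_ne_zero j) ∈ rotRP2 := by
      intro j
      fin_cases j
      · refine ⟨![1, 0, 0], ?_, ?_⟩
        · intro h
          have := congrFun h 0
          simp [Complex.exp_ne_zero] at this
        · refine ((Projectivization.mk_eq_mk_iff' ℂ _ _ _ (stdVec_ne_zero 0)).2
            ⟨Complex.exp (π / 3 * I), ?_⟩).symm
          funext i; fin_cases i <;> simp [stdVec]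
      · refine ⟨![0, 1, 0], ?_, ?_⟩
        · intro h
          have := congrFun h 1
          simp [Complex.exp_ne_zero] at this
        · refine ((Projectivization.mk_eq_mk_iff' ℂ _ _ _ (stdVec_ne_zero 1)).2
            ⟨Complex.exp (-(π / 3) * I), ?_⟩).symm
          funext i; fin_cases i <;> simp [stdVec]
      · refine ⟨![0, 0, 1], ?_, ?_⟩
        · intro h
          have := congrFun h 2
          simp at this
        · refine ((Projectivization.mk_eq_mk_iff' ℂ _ _ _ (stdVec_ne_zero 2)).2
            ⟨1, ?_⟩).symm
          funext i; fin_cases i <;> simp [stdVec]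
    rcases hp with h | h | h <;> rw [h] <;> exact ⟨hreal _, hrot _⟩
end
end
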